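/- Let p be a real polynomial of degree k ≥ 2 and x ∈ ℝ with p'(x) ≠ 0. Then the secant map G(x,y) = (y, (y·q(x,y) − p(y))/q(x,y)) is differentiable at the diagonal point (x,x) and its total derivative there is the linear map with matrix [[0, 1], [c, c]], where c = p(x)·p''(x)/(2·p'(x)²). (Moreover G(x,x) = (x, N_p(x)), where N_p(x) = x − p(x)/p'(x) is the Newton map of p.) -/

import Mathlib

open Polynomial Filter Topology

/-- The symmetric polynomial `q(x,y)` associated to `p`, satisfying
`p(x) - p(y) = (x - y) * secQ p x y`. -/
noncomputable def secQ (p : Polynomial ℝ) (x y : ℝ) : ℝ :=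
  ∑ j ∈ Finset.range (p.natDegree + 1),
    p.coeff j * ∑ i ∈ Finset.range j, x ^ i * y ^ (j - 1 - i)

/-- The secant map in extended form: `G(x,y) = (y, (y·q(x,y) − p(y))/q(x,y))`. -/
noncomputable def secG (p : Polynomial ℝ) (z : ℝ × ℝ) : ℝ × ℝ :=
  (z.2, (z.2 * secQ p z.1 z.2 - Polynomial.eval z.2 p) / secQ p z.1 z.2)

lemma secQ_diag (p : Polynomial ℝ) (x : ℝ) : secQ p x x = p.derivative.eval x := by
  rw [derivative_eval, Polynomial.sum_over_range' _ (by simp) (p.natDegree + 1) (lt_add_one _)]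
  unfold secQ
  refine Finset.sum_congr rfl fun j _ => ?_
  rw [mul_assoc]
  congr 1
  have : ∀ i ∈ Finset.range j, x ^ i * x ^ (j - 1 - i) = x ^ (j - 1) := by
    intro i hi
    rw [← pow_add]
    congr 1
    have := Finset.mem_range.mp hi
    omega
  rw [Finset.sum_congr rfl this, Finset.sum_const, Finset.card_range, nsmul_eq_mul]

lemma key_sum (p : Polynomial ℝ) (x : ℝ) :
    2 * ∑ j ∈ Finset.range (p.natDegree + 1),
        p.coeff j * ((∑ i ∈ Finset.range j, (i : ℝ)) * x ^ (j - 2))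
      = p.derivative.derivative.eval x := by
  have hdeg : p.derivative.natDegree < p.natDegree + 1 :=
    lt_of_le_of_lt (Polynomial.natDegree_derivative_le p) (by omega)
  rw [derivative_eval, Polynomial.sum_over_range' _ (by simp) (p.natDegree + 1) hdeg]
  simp only [Polynomial.coeff_derivative]
  rw [Finset.mul_sum]
  -- LHS : ∑ j, 2 * (coeff j * (S j * x^(j-2)))
  have gauss : ∀ j : ℕ, 2 * (∑ i ∈ Finset.range j, (i : ℝ)) = ((j * (j - 1) : ℕ) : ℝ) := by
    intro j
    rw [← Finset.sum_range_id_mul_two j]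
    push_cast
    ring
  have lhs_eq : ∀ j : ℕ, 2 * (p.coeff j * ((∑ i ∈ Finset.range j, (i : ℝ)) * x ^ (j - 2)))
      = p.coeff j * ((j * (j - 1) : ℕ) : ℝ) * x ^ (j - 2) := by
    intro j
    rw [← gauss j]; ring
  rw [Finset.sum_congr rfl fun j _ => lhs_eq j]
  rw [Finset.sum_range_succ' _ p.natDegree, Finset.sum_range_succ]
  have hlast : p.coeff (p.natDegree + 1) = 0 :=
    Polynomial.coeff_eq_zero_of_natDegree_lt (lt_add_one _)
  rw [hlast]
  simp only [Nat.zero_sub, Nat.mul_zero, Nat.zero_mul, Nat.cast_zero, mul_zero, zero_mul, add_zero,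
    zero_add]
  refine Finset.sum_congr rfl fun n _ => ?_
  have h1 : (n + 1) * (n + 1 - 1) = (n + 1) * n := by simp
  have h2 : n + 1 - 2 = n - 1 := by omega
  rw [h1, h2]
  push_cast
  ring

lemma inner_fst (j : ℕ) (x : ℝ) :
    ∑ i ∈ Finset.range j, x ^ (j - 1 - i) * ((i : ℝ) * x ^ (i - 1))
      = (∑ i ∈ Finset.range j, (i : ℝ)) * x ^ (j - 2) := by
  rw [Finset.sum_mul]
  refine Finset.sum_congr rfl fun i hi => ?_
  rcases Nat.eq_zero_or_pos i with h | h
  · subst h; simp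
  · have hij := Finset.mem_range.mp hi
    have : x ^ (j - 1 - i) * x ^ (i - 1) = x ^ (j - 2) := by
      rw [← pow_add]; congr 1; omega
    calc x ^ (j - 1 - i) * ((i : ℝ) * x ^ (i - 1))
        = (i : ℝ) * (x ^ (j - 1 - i) * x ^ (i - 1)) := by ring
      _ = (i : ℝ) * x ^ (j - 2) := by rw [this]

lemma inner_snd (j : ℕ) (x : ℝ) :
    ∑ i ∈ Finset.range j, x ^ i * (((j - 1 - i : ℕ) : ℝ) * x ^ (j - 1 - i - 1))
      = (∑ i ∈ Finset.range j, (i : ℝ)) * x ^ (j - 2) := by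
  rw [← Finset.sum_range_reflect (fun i => (i : ℝ)) j, Finset.sum_mul]
  refine Finset.sum_congr rfl fun i hi => ?_
  have hij := Finset.mem_range.mp hi
  rcases Nat.lt_or_ge i (j - 1) with h | h
  · have : x ^ i * x ^ (j - 1 - i - 1) = x ^ (j - 2) := by
      rw [← pow_add]; congr 1; omega
    calc x ^ i * (((j - 1 - i : ℕ) : ℝ) * x ^ (j - 1 - i - 1))
        = ((j - 1 - i : ℕ) : ℝ) * (x ^ i * x ^ (j - 1 - i - 1)) := by ring
      _ = ((j - 1 - i : ℕ) : ℝ) * x ^ (j - 2) := by rw [this]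
  · have : j - 1 - i = 0 := by omega
    rw [this]; simp

lemma secQ_hasFDerivAt (p : Polynomial ℝ) (x : ℝ) :
    HasFDerivAt (fun z : ℝ × ℝ => secQ p z.1 z.2)
      ((p.derivative.derivative.eval x / 2) • ContinuousLinearMap.fst ℝ ℝ ℝ +
       (p.derivative.derivative.eval x / 2) • ContinuousLinearMap.snd ℝ ℝ ℝ) (x, x) := by
  have hfst : ∀ i : ℕ, HasFDerivAt (fun z : ℝ × ℝ => z.1 ^ i)
      (((i : ℝ) * x ^ (i - 1)) • ContinuousLinearMap.fst ℝ ℝ ℝ) (x, x) :=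
    fun i => (hasDerivAt_pow i x).comp_hasFDerivAt (x, x) hasFDerivAt_fst
  have hsnd : ∀ i : ℕ, HasFDerivAt (fun z : ℝ × ℝ => z.2 ^ i)
      (((i : ℝ) * x ^ (i - 1)) • ContinuousLinearMap.snd ℝ ℝ ℝ) (x, x) :=
    fun i => (hasDerivAt_pow i x).comp_hasFDerivAt (x, x) hasFDerivAt_snd
  have H : ∀ j : ℕ, HasFDerivAt (fun z : ℝ × ℝ => ∑ i ∈ Finset.range j, z.1 ^ i * z.2 ^ (j - 1 - i))
      (((∑ i ∈ Finset.range j, (i : ℝ)) * x ^ (j - 2)) • ContinuousLinearMap.fst ℝ ℝ ℝ +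
       ((∑ i ∈ Finset.range j, (i : ℝ)) * x ^ (j - 2)) • ContinuousLinearMap.snd ℝ ℝ ℝ) (x, x) := by
    intro j
    have h := HasFDerivAt.fun_sum (u := Finset.range j)
      (A := fun i (z : ℝ × ℝ) => z.1 ^ i * z.2 ^ (j - 1 - i))
      (A' := fun i => x ^ i • (((j - 1 - i : ℕ) : ℝ) * x ^ (j - 1 - i - 1)) •
          ContinuousLinearMap.snd ℝ ℝ ℝ +
        x ^ (j - 1 - i) • ((i : ℝ) * x ^ (i - 1)) • ContinuousLinearMap.fst ℝ ℝ ℝ)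
      (x := (x, x)) (fun i _ => (hfst i).mul (hsnd (j - 1 - i)))
    refine h.congr_fderiv ?_
    rw [Finset.sum_add_distrib]
    simp only [smul_smul]
    rw [← Finset.sum_smul, ← Finset.sum_smul, inner_fst, inner_snd]
    abel
  have h := HasFDerivAt.fun_sum (u := Finset.range (p.natDegree + 1))
    (A := fun j (z : ℝ × ℝ) => p.coeff j * ∑ i ∈ Finset.range j, z.1 ^ i * z.2 ^ (j - 1 - i))
    (A' := fun j => p.coeff j •
      (((∑ i ∈ Finset.range j, (i : ℝ)) * x ^ (j - 2)) • ContinuousLinearMap.fst ℝ ℝ ℝ +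
       ((∑ i ∈ Finset.range j, (i : ℝ)) * x ^ (j - 2)) • ContinuousLinearMap.snd ℝ ℝ ℝ))
    (x := (x, x)) (fun j _ => (H j).const_mul (p.coeff j))
  refine h.congr_fderiv ?_
  simp only [smul_add, smul_smul]
  rw [Finset.sum_add_distrib, ← Finset.sum_smul, ← Finset.sum_smul]
  have : ∑ j ∈ Finset.range (p.natDegree + 1),
      p.coeff j * ((∑ i ∈ Finset.range j, (i : ℝ)) * x ^ (j - 2))
      = p.derivative.derivative.eval x / 2 := by
    rw [← key_sum p x]; ring
  rw [this]


theorem secant_fderiv_diagonal (p : Polynomial ℝ) (hp : 2 ≤ p.natDegree) (x : ℝ)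
    (hx : p.derivative.eval x ≠ 0) :
    HasFDerivAt (secG p)
      ((ContinuousLinearMap.snd ℝ ℝ ℝ).prod
        ((p.eval x * p.derivative.derivative.eval x / (2 * (p.derivative.eval x) ^ 2)) •
            ContinuousLinearMap.fst ℝ ℝ ℝ +
          (p.eval x * p.derivative.derivative.eval x / (2 * (p.derivative.eval x) ^ 2)) •
            ContinuousLinearMap.snd ℝ ℝ ℝ))
      (x, x) ∧
    secG p (x, x) = (x, x - p.eval x / p.derivative.eval x) := by
  set b := p.derivative.eval x with hb
  set a := p.eval x with ha
  set e := p.derivative.derivative.eval x with he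
  set D := (e / 2) • ContinuousLinearMap.fst ℝ ℝ ℝ + (e / 2) • ContinuousLinearMap.snd ℝ ℝ ℝ
    with hD
  have hq : HasFDerivAt (fun z : ℝ × ℝ => secQ p z.1 z.2) D (x, x) := secQ_hasFDerivAt p x
  have hQx : secQ p x x = b := secQ_diag p x
  have hinv : HasFDerivAt (fun z : ℝ × ℝ => (secQ p z.1 z.2)⁻¹) ((-(b ^ 2)⁻¹) • D) (x, x) := by
    have h := (hasDerivAt_inv (x := b) hx).comp_hasFDerivAt_of_eq (x, x) hq hQx.symm
    exact h
  have hev : HasFDerivAt (fun z : ℝ × ℝ => Polynomial.eval z.2 p)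
      (b • ContinuousLinearMap.snd ℝ ℝ ℝ) (x, x) :=
    (p.hasDerivAt x).comp_hasFDerivAt (f := fun z : ℝ × ℝ => z.2) (x, x) hasFDerivAt_snd
  have hnum : HasFDerivAt (fun z : ℝ × ℝ => z.2 * secQ p z.1 z.2 - Polynomial.eval z.2 p)
      ((x • D + b • ContinuousLinearMap.snd ℝ ℝ ℝ) - b • ContinuousLinearMap.snd ℝ ℝ ℝ)
      (x, x) := by
    have h := (hasFDerivAt_snd.fun_mul hq).fun_sub hev
    simpa [hQx] using h
  have hdiv : HasFDerivAt
      (fun z : ℝ × ℝ => (z.2 * secQ p z.1 z.2 - Polynomial.eval z.2 p) / secQ p z.1 z.2)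
      ((x * b - a) • ((-(b ^ 2)⁻¹) • D) +
        b⁻¹ • ((x • D + b • ContinuousLinearMap.snd ℝ ℝ ℝ) - b • ContinuousLinearMap.snd ℝ ℝ ℝ))
      (x, x) := by
    have h := hnum.fun_mul hinv
    simp only [hQx, div_eq_mul_inv] at h ⊢
    simpa [hQx, inv_inv] using h
  have hD2 : ((x * b - a) • ((-(b ^ 2)⁻¹) • D) +
        b⁻¹ • ((x • D + b • ContinuousLinearMap.snd ℝ ℝ ℝ) - b • ContinuousLinearMap.snd ℝ ℝ ℝ))
      = (a * e / (2 * b ^ 2)) • ContinuousLinearMap.fst ℝ ℝ ℝ +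
        (a * e / (2 * b ^ 2)) • ContinuousLinearMap.snd ℝ ℝ ℝ := by
    refine ContinuousLinearMap.ext fun w => ?_
    simp only [hD, ContinuousLinearMap.add_apply, ContinuousLinearMap.smul_apply,
      ContinuousLinearMap.sub_apply, ContinuousLinearMap.coe_fst', ContinuousLinearMap.coe_snd',
      smul_eq_mul]
    field_simp
    ring
  constructor
  · rw [← hD2]
    exact hasFDerivAt_snd.prodMk hdiv
  · have : secQ p x x = b := hQx
    simp only [secG, this]
    refine Prod.ext rfl ?_
    field_simp
    rw [ha]
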